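/- (Strong hyperbolicity of the projected symbol.) Let γ > 0, v = (B, w, z) with 0 < B < 1, and ξ ∈ ℝ² ∖ {0}. Assume Δ₁(ξ) ≠ 0, Δ₂(ξ) > 0 and Δ₃(ξ) ≠ 0. Then the matrix 𝐏(ξ)Ã(ξ, v) is diagonalizable over ℝ: there exists an invertible real 5×5 matrix V such that V⁻¹·𝐏(ξ)Ã(ξ, v)·V = diag(0, (w−Bz)·ξ, (w+(1−B)z)·ξ, (w+(1−2B)z)·ξ − √((1−B)Δ₂(ξ)), (w+(1−2B)z)·ξ + √((1−B)Δ₂(ξ))). -/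

import Mathlib

set_option maxRecDepth 100000 in
set_option maxHeartbeats 1000000 in
private lemma det_fin_four' {R : Type*} [CommRing R] (M : Matrix (Fin 4) (Fin 4) R) :
    M.det =
      M 0 0 * (M 1 1 * (M 2 2 * M 3 3 - M 2 3 * M 3 2) - M 1 2 * (M 2 1 * M 3 3 - M 2 3 * M 3 1) + M 1 3 * (M 2 1 * M 3 2 - M 2 2 * M 3 1))
    - M 0 1 * (M 1 0 * (M 2 2 * M 3 3 - M 2 3 * M 3 2) - M 1 2 * (M 2 0 * M 3 3 - M 2 3 * M 3 0) + M 1 3 * (M 2 0 * M 3 2 - M 2 2 * M 3 0))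
    + M 0 2 * (M 1 0 * (M 2 1 * M 3 3 - M 2 3 * M 3 1) - M 1 1 * (M 2 0 * M 3 3 - M 2 3 * M 3 0) + M 1 3 * (M 2 0 * M 3 1 - M 2 1 * M 3 0))
    - M 0 3 * (M 1 0 * (M 2 1 * M 3 2 - M 2 2 * M 3 1) - M 1 1 * (M 2 0 * M 3 2 - M 2 2 * M 3 0) + M 1 2 * (M 2 0 * M 3 1 - M 2 1 * M 3 0)) := by
  rw [Matrix.det_succ_row_zero, Fin.sum_univ_four]
  simp [Matrix.det_fin_three, Matrix.submatrix_apply, Fin.succAbove, Fin.lt_def]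
  ring

private lemma sa_0_0 : ((0:Fin 5).succAbove ((0:Fin 4))) = 1 := rfl
private lemma sa_0_1 : ((0:Fin 5).succAbove ((1:Fin 4))) = 2 := rfl
private lemma sa_0_2 : ((0:Fin 5).succAbove ((2:Fin 4))) = 3 := rfl
private lemma sa_0_3 : ((0:Fin 5).succAbove ((3:Fin 4))) = 4 := rfl
private lemma sa_1_0 : ((1:Fin 5).succAbove ((0:Fin 4))) = 0 := rfl
private lemma sa_1_1 : ((1:Fin 5).succAbove ((1:Fin 4))) = 2 := rfl
private lemma sa_1_2 : ((1:Fin 5).succAbove ((2:Fin 4))) = 3 := rfl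
private lemma sa_1_3 : ((1:Fin 5).succAbove ((3:Fin 4))) = 4 := rfl
private lemma sa_2_0 : ((2:Fin 5).succAbove ((0:Fin 4))) = 0 := rfl
private lemma sa_2_1 : ((2:Fin 5).succAbove ((1:Fin 4))) = 1 := rfl
private lemma sa_2_2 : ((2:Fin 5).succAbove ((2:Fin 4))) = 3 := rfl
private lemma sa_2_3 : ((2:Fin 5).succAbove ((3:Fin 4))) = 4 := rfl
private lemma sa_3_0 : ((3:Fin 5).succAbove ((0:Fin 4))) = 0 := rfl
private lemma sa_3_1 : ((3:Fin 5).succAbove ((1:Fin 4))) = 1 := rfl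
private lemma sa_3_2 : ((3:Fin 5).succAbove ((2:Fin 4))) = 2 := rfl
private lemma sa_3_3 : ((3:Fin 5).succAbove ((3:Fin 4))) = 4 := rfl
private lemma sa_4_0 : ((4:Fin 5).succAbove ((0:Fin 4))) = 0 := rfl
private lemma sa_4_1 : ((4:Fin 5).succAbove ((1:Fin 4))) = 1 := rfl
private lemma sa_4_2 : ((4:Fin 5).succAbove ((2:Fin 4))) = 2 := rfl
private lemma sa_4_3 : ((4:Fin 5).succAbove ((3:Fin 4))) = 3 := rfl
private lemma fs_0 : (Fin.succ (0:Fin 4)) = (1:Fin 5) := rfl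
private lemma fs_1 : (Fin.succ (1:Fin 4)) = (2:Fin 5) := rfl
private lemma fs_2 : (Fin.succ (2:Fin 4)) = (3:Fin 5) := rfl
private lemma fs_3 : (Fin.succ (3:Fin 4)) = (4:Fin 5) := rfl
private lemma v5_0 : (((0:Fin 5)):ℕ) = 0 := rfl
private lemma v5_1 : (((1:Fin 5)):ℕ) = 1 := rfl
private lemma v5_2 : (((2:Fin 5)):ℕ) = 2 := rfl
private lemma v5_3 : (((3:Fin 5)):ℕ) = 3 := rfl
private lemma v5_4 : (((4:Fin 5)):ℕ) = 4 := rfl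

set_option maxHeartbeats 2000000 in
private lemma det_fin_five' {R : Type*} [CommRing R] (M : Matrix (Fin 5) (Fin 5) R) :
    M.det = M 0 0 * (M 1 1 * (M 2 2 * (M 3 3 * (M 4 4) - M 3 4 * (M 4 3)) - M 2 3 * (M 3 2 * (M 4 4) - M 3 4 * (M 4 2)) + M 2 4 * (M 3 2 * (M 4 3) - M 3 3 * (M 4 2))) - M 1 2 * (M 2 1 * (M 3 3 * (M 4 4) - M 3 4 * (M 4 3)) - M 2 3 * (M 3 1 * (M 4 4) - M 3 4 * (M 4 1)) + M 2 4 * (M 3 1 * (M 4 3) - M 3 3 * (M 4 1))) + M 1 3 * (M 2 1 * (M 3 2 * (M 4 4) - M 3 4 * (M 4 2)) - M 2 2 * (M 3 1 * (M 4 4) - M 3 4 * (M 4 1)) + M 2 4 * (M 3 1 * (M 4 2) - M 3 2 * (M 4 1))) - M 1 4 * (M 2 1 * (M 3 2 * (M 4 3) - M 3 3 * (M 4 2)) - M 2 2 * (M 3 1 * (M 4 3) - M 3 3 * (M 4 1)) + M 2 3 * (M 3 1 * (M 4 2) - M 3 2 * (M 4 1)))) - M 0 1 * (M 1 0 * (M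 2 2 * (M 3 3 * (M 4 4) - M 3 4 * (M 4 3)) - M 2 3 * (M 3 2 * (M 4 4) - M 3 4 * (M 4 2)) + M 2 4 * (M 3 2 * (M 4 3) - M 3 3 * (M 4 2))) - M 1 2 * (M 2 0 * (M 3 3 * (M 4 4) - M 3 4 * (M 4 3)) - M 2 3 * (M 3 0 * (M 4 4) - M 3 4 * (M 4 0)) + M 2 4 * (M 3 0 * (M 4 3) - M 3 3 * (M 4 0))) + M 1 3 * (M 2 0 * (M 3 2 * (M 4 4) - M 3 4 * (M 4 2)) - M 2 2 * (M 3 0 * (M 4 4) - M 3 4 * (M 4 0)) + M 2 4 * (M 3 0 * (M 4 2) - M 3 2 * (M 4 0))) - M 1 4 * (M 2 0 * (M 3 2 * (M 4 3) - M 3 3 * (M 4 2)) - M 2 2 * (M 3 0 * (M 4 3) - M 3 3 * (M 4 0)) + M 2 3 * (M 3 0 * (M 4 2) - M 3 2 * (M 4 0)))) + M 0 2 * (M 1 0 * (M 2 1 * (M 3 3 * (M 4 4) - M 3 4 * (M 4 3)) - M 2 3 * (M 3 1 * (M 4 4) - M 3 4 * (M 4 1)) + M 2 4 * (M 3 1 *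 (M 4 3) - M 3 3 * (M 4 1))) - M 1 1 * (M 2 0 * (M 3 3 * (M 4 4) - M 3 4 * (M 4 3)) - M 2 3 * (M 3 0 * (M 4 4) - M 3 4 * (M 4 0)) + M 2 4 * (M 3 0 * (M 4 3) - M 3 3 * (M 4 0))) + M 1 3 * (M 2 0 * (M 3 1 * (M 4 4) - M 3 4 * (M 4 1)) - M 2 1 * (M 3 0 * (M 4 4) - M 3 4 * (M 4 0)) + M 2 4 * (M 3 0 * (M 4 1) - M 3 1 * (M 4 0))) - M 1 4 * (M 2 0 * (M 3 1 * (M 4 3) - M 3 3 * (M 4 1)) - M 2 1 * (M 3 0 * (M 4 3) - M 3 3 * (M 4 0)) + M 2 3 * (M 3 0 * (M 4 1) - M 3 1 * (M 4 0)))) - M 0 3 * (M 1 0 * (M 2 1 * (M 3 2 * (M 4 4) - M 3 4 * (M 4 2)) - M 2 2 * (M 3 1 * (M 4 4) - M 3 4 * (M 4 1)) + M 2 4 * (M 3 1 * (M 4 2) - M 3 2 * (M 4 1))) - M 1 1 * (M 2 0 * (M 3 2 * (M 4 4) - M 3 4 * (M 4 2)) - M 2 2 * (M 3 0 * (M 4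 4) - M 3 4 * (M 4 0)) + M 2 4 * (M 3 0 * (M 4 2) - M 3 2 * (M 4 0))) + M 1 2 * (M 2 0 * (M 3 1 * (M 4 4) - M 3 4 * (M 4 1)) - M 2 1 * (M 3 0 * (M 4 4) - M 3 4 * (M 4 0)) + M 2 4 * (M 3 0 * (M 4 1) - M 3 1 * (M 4 0))) - M 1 4 * (M 2 0 * (M 3 1 * (M 4 2) - M 3 2 * (M 4 1)) - M 2 1 * (M 3 0 * (M 4 2) - M 3 2 * (M 4 0)) + M 2 2 * (M 3 0 * (M 4 1) - M 3 1 * (M 4 0)))) + M 0 4 * (M 1 0 * (M 2 1 * (M 3 2 * (M 4 3) - M 3 3 * (M 4 2)) - M 2 2 * (M 3 1 * (M 4 3) - M 3 3 * (M 4 1)) + M 2 3 * (M 3 1 * (M 4 2) - M 3 2 * (M 4 1))) - M 1 1 * (M 2 0 * (M 3 2 * (M 4 3) - M 3 3 * (M 4 2)) - M 2 2 * (M 3 0 * (M 4 3) - M 3 3 * (M 4 0)) + M 2 3 * (M 3 0 * (M 4 2) - M 3 2 * (M 4 0))) + M 1 2 * (M 2 0 * (M 3 1 * (M 4 3) - M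 3 3 * (M 4 1)) - M 2 1 * (M 3 0 * (M 4 3) - M 3 3 * (M 4 0)) + M 2 3 * (M 3 0 * (M 4 1) - M 3 1 * (M 4 0))) - M 1 3 * (M 2 0 * (M 3 1 * (M 4 2) - M 3 2 * (M 4 1)) - M 2 1 * (M 3 0 * (M 4 2) - M 3 2 * (M 4 0)) + M 2 2 * (M 3 0 * (M 4 1) - M 3 1 * (M 4 0)))) := by
  rw [Matrix.det_succ_row_zero, Fin.sum_univ_five]
  simp only [det_fin_four', Matrix.submatrix_apply, sa_0_0, sa_0_1, sa_0_2, sa_0_3, sa_1_0, sa_1_1, sa_1_2, sa_1_3, sa_2_0, sa_2_1, sa_2_2, sa_2_3, sa_3_0, sa_3_1, sa_3_2, sa_3_3, sa_4_0, sa_4_1, sa_4_2, sa_4_3, fs_0, fs_1, fs_2, fs_3, v5_0, v5_1, v5_2, v5_3, v5_4]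
  norm_num
  ring

set_option maxHeartbeats 4000000
set_option maxRecDepth 100000



open Matrix

/-- The flux matrix `Ã₁(v)` of the two-phase system in the variables `v = (B, w, z)`. -/
noncomputable def At1 (γ B w1 w2 z1 z2 : ℝ) : Matrix (Fin 5) (Fin 5) ℝ :=
  !![w1 + z1 * (1 - 2 * B), B, 0, B * (1 - B), 0;
     γ + z1 ^ 2 * (1 - 2 * B), w1 + B * z1, 0, 2 * B * z1 * (1 - B), 0;
     z1 * z2 * (1 - 2 * B), B * z2, w1, B * z2 * (1 - B), B * z1 * (1 - B);
     γ / B - z1 ^ 2, z1, 0, w1 + z1 * (1 - 2 * B), 0;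
     -(z1 * z2), 0, z1, 0, w1 + z1 * (1 - 2 * B)]

/-- The flux matrix `Ã₂(v)` of the two-phase system in the variables `v = (B, w, z)`. -/
noncomputable def At2 (γ B w1 w2 z1 z2 : ℝ) : Matrix (Fin 5) (Fin 5) ℝ :=
  !![w2 + z2 * (1 - 2 * B), 0, B, 0, B * (1 - B);
     z1 * z2 * (1 - 2 * B), w2, B * z1, B * z2 * (1 - B), B * z1 * (1 - B);
     γ + z2 ^ 2 * (1 - 2 * B), 0, w2 + B * z2, 0, 2 * B * z2 * (1 - B);
     -(z1 * z2), z2, 0, w2 + z2 * (1 - 2 * B), 0;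
     γ / B - z2 ^ 2, 0, z2, 0, w2 + z2 * (1 - 2 * B)]

/-- The symbol `Ã(ξ, v) = ξ₁Ã₁(v) + ξ₂Ã₂(v)`. -/
noncomputable def At (γ B w1 w2 z1 z2 ξ1 ξ2 : ℝ) : Matrix (Fin 5) (Fin 5) ℝ :=
  ξ1 • At1 γ B w1 w2 z1 z2 + ξ2 • At2 γ B w1 w2 z1 z2

/-- The symbol `𝐏(ξ) = diag(1, I₂ − ξξᵀ/|ξ|², I₂)` of the generalized Leray projector. -/
noncomputable def Pm (ξ1 ξ2 : ℝ) : Matrix (Fin 5) (Fin 5) ℝ :=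
  !![1, 0, 0, 0, 0;
     0, 1 - ξ1 ^ 2 / (ξ1 ^ 2 + ξ2 ^ 2), -(ξ1 * ξ2) / (ξ1 ^ 2 + ξ2 ^ 2), 0, 0;
     0, -(ξ1 * ξ2) / (ξ1 ^ 2 + ξ2 ^ 2), 1 - ξ2 ^ 2 / (ξ1 ^ 2 + ξ2 ^ 2), 0, 0;
     0, 0, 0, 1, 0;
     0, 0, 0, 0, 1]

/-- `Δ₁(ξ) := (1−B)(z·ξ)² − γ|ξ|² + (w·ξ)(z·ξ)`. -/
noncomputable def D1 (γ B w1 w2 z1 z2 ξ1 ξ2 : ℝ) : ℝ :=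
  (1 - B) * (z1 * ξ1 + z2 * ξ2) ^ 2 - γ * (ξ1 ^ 2 + ξ2 ^ 2) +
    (w1 * ξ1 + w2 * ξ2) * (z1 * ξ1 + z2 * ξ2)

/-- `Δ₂(ξ) := γ|ξ|² − B(z·ξ)²`. -/
noncomputable def D2 (γ B z1 z2 ξ1 ξ2 : ℝ) : ℝ :=
  γ * (ξ1 ^ 2 + ξ2 ^ 2) - B * (z1 * ξ1 + z2 * ξ2) ^ 2

/-- `Δ₃(ξ) := (1 − 3B(1−B))(z·ξ)² + (w·ξ)² − γ(1−B)|ξ|² + 2(1−2B)(w·ξ)(z·ξ)`. -/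
noncomputable def D3 (γ B w1 w2 z1 z2 ξ1 ξ2 : ℝ) : ℝ :=
  (1 - 3 * B * (1 - B)) * (z1 * ξ1 + z2 * ξ2) ^ 2 + (w1 * ξ1 + w2 * ξ2) ^ 2 -
    γ * (1 - B) * (ξ1 ^ 2 + ξ2 ^ 2) +
    2 * (1 - 2 * B) * (w1 * ξ1 + w2 * ξ2) * (z1 * ξ1 + z2 * ξ2)

/-- Strong hyperbolicity of the projected symbol: under `Δ₁(ξ) ≠ 0`, `Δ₂(ξ) > 0`,
`Δ₃(ξ) ≠ 0`, the matrix `𝐏(ξ)Ã(ξ, v)` is diagonalizable over `ℝ`, with real eigenvalues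
`0`, `(w−Bz)·ξ`, `(w+(1−B)z)·ξ`, `(w+(1−2B)z)·ξ ∓ √((1−B)Δ₂(ξ))`. -/
theorem stmt12 (γ B w1 w2 z1 z2 ξ1 ξ2 : ℝ) (hγ : 0 < γ) (hB0 : 0 < B) (hB1 : B < 1)
    (hξ : (ξ1, ξ2) ≠ (0, 0))
    (hD1 : D1 γ B w1 w2 z1 z2 ξ1 ξ2 ≠ 0) (hD2 : 0 < D2 γ B z1 z2 ξ1 ξ2)
    (hD3 : D3 γ B w1 w2 z1 z2 ξ1 ξ2 ≠ 0) :
    ∃ V : Matrix (Fin 5) (Fin 5) ℝ, IsUnit V.det ∧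
      V⁻¹ * (Pm ξ1 ξ2 * At γ B w1 w2 z1 z2 ξ1 ξ2) * V =
        Matrix.diagonal
          ![0,
            (w1 - B * z1) * ξ1 + (w2 - B * z2) * ξ2,
            (w1 + (1 - B) * z1) * ξ1 + (w2 + (1 - B) * z2) * ξ2,
            (w1 + (1 - 2 * B) * z1) * ξ1 + (w2 + (1 - 2 * B) * z2) * ξ2
              - Real.sqrt ((1 - B) * D2 γ B z1 z2 ξ1 ξ2),
            (w1 + (1 - 2 * B) * z1) * ξ1 + (w2 + (1 - 2 * B) * z2) * ξ2
              + Real.sqrt ((1 - B) * D2 γ B z1 z2 ξ1 ξ2)] := by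
  have hB : B ≠ 0 := ne_of_gt hB0
  have hξ' : ¬(ξ1 = 0 ∧ ξ2 = 0) := fun h => hξ (by simp [h.1, h.2])
  have hd : (0:ℝ) < ξ1^2 + ξ2^2 := by
    rcases eq_or_ne ξ1 0 with h|h
    · have h2 : ξ2 ≠ 0 := fun hh => hξ' ⟨h, hh⟩
      positivity
    · positivity
  have hd0 : ξ1^2 + ξ2^2 ≠ 0 := ne_of_gt hd
  have h1B : (0:ℝ) < 1 - B := by linarith
  have hK : 0 < (1-B) * D2 γ B z1 z2 ξ1 ξ2 := mul_pos h1B hD2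
  set s := Real.sqrt ((1 - B) * D2 γ B z1 z2 ξ1 ξ2) with hsdef
  have hs0 : 0 < s := Real.sqrt_pos.mpr hK
  have hs2 : s^2 = (1-B) * (γ*(ξ1^2+ξ2^2) - B*(z1*ξ1+z2*ξ2)^2) := by
    rw [hsdef, Real.sq_sqrt hK.le]; rfl
  set V : Matrix (Fin 5) (Fin 5) ℝ :=
      !![B*(ξ1^2+ξ2^2)*((w1*ξ1+w2*ξ2)-B*(z1*ξ1+z2*ξ2)), 0, 0, B*(1-B)*(ξ1^2+ξ2^2), B*(1-B)*(ξ1^2+ξ2^2);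
                ((1-B)*(γ*(ξ1^2+ξ2^2)-B*(z1*ξ1+z2*ξ2)^2) - ((w1*ξ1+w2*ξ2)+(1-2*B)*(z1*ξ1+z2*ξ2))^2)*ξ1-(B*((w1*ξ1+w2*ξ2)-B*(z1*ξ1+z2*ξ2))*(z2*ξ1-z1*ξ2))*ξ2, (1-B)*ξ2, -(B*ξ2), -(B*(1-B)*(z2*ξ1-z1*ξ2)*ξ2), -(B*(1-B)*(z2*ξ1-z1*ξ2)*ξ2);
                ((1-B)*(γ*(ξ1^2+ξ2^2)-B*(z1*ξ1+z2*ξ2)^2) - ((w1*ξ1+w2*ξ2)+(1-2*B)*(z1*ξ1+z2*ξ2))^2)*ξ2+(B*((w1*ξ1+w2*ξ2)-B*(z1*ξ1+z2*ξ2))*(z2*ξ1-z1*ξ2))*ξ1, -((1-B)*ξ1), B*ξ1, B*(1-B)*(z2*ξ1-z1*ξ2)*ξ1, B*(1-B)*(z2*ξ1-z1*ξ2)*ξ1;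
                ((z1*ξ1+z2*ξ2)*((w1*ξ1+w2*ξ2)+(1-2*B)*(z1*ξ1+z2*ξ2)) - (γ*(ξ1^2+ξ2^2)-B*(z1*ξ1+z2*ξ2)^2))*ξ1, -ξ2, -ξ2, -(s*ξ1), s*ξ1;
                ((z1*ξ1+z2*ξ2)*((w1*ξ1+w2*ξ2)+(1-2*B)*(z1*ξ1+z2*ξ2)) - (γ*(ξ1^2+ξ2^2)-B*(z1*ξ1+z2*ξ2)^2))*ξ2, ξ1, ξ1, -(s*ξ2), s*ξ2] with hV
  have hdet : V.det = 2*B*(1-B)*(ξ1^2+ξ2^2)^3 * D3 γ B w1 w2 z1 z2 ξ1 ξ2 * s := by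
    rw [hV, det_fin_five']
    unfold D3
    norm_num
    simp only [Matrix.cons_val, Matrix.cons_val_zero, Matrix.cons_val_one]
    ring
  have hu : IsUnit V.det := by
    rw [hdet]
    exact isUnit_iff_ne_zero.mpr (mul_ne_zero (mul_ne_zero (by positivity) hD3) (ne_of_gt hs0))
  have hMV : Pm ξ1 ξ2 * At γ B w1 w2 z1 z2 ξ1 ξ2 * V =
      V * Matrix.diagonal
          ![0,
            (w1 - B * z1) * ξ1 + (w2 - B * z2) * ξ2,
            (w1 + (1 - B) * z1) * ξ1 + (w2 + (1 - B) * z2) * ξ2,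
            (w1 + (1 - 2 * B) * z1) * ξ1 + (w2 + (1 - 2 * B) * z2) * ξ2 - s,
            (w1 + (1 - 2 * B) * z1) * ξ1 + (w2 + (1 - 2 * B) * z2) * ξ2 + s] := by
    rw [hV]
    ext i j
    fin_cases i <;> fin_cases j
    · simp [Matrix.mul_apply, Fin.sum_univ_five, Pm, At, At1, At2, Matrix.diagonal]
      try field_simp
      ring
    · simp [Matrix.mul_apply, Fin.sum_univ_five, Pm, At, At1, At2, Matrix.diagonal]
      try field_simp
      ring
    · simp [Matrix.mul_apply, Fin.sum_univ_five, Pm, At, At1, At2, Matrix.diagonal]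
      try field_simp
      ring
    · simp [Matrix.mul_apply, Fin.sum_univ_five, Pm, At, At1, At2, Matrix.diagonal]
      try field_simp
      ring
    · simp [Matrix.mul_apply, Fin.sum_univ_five, Pm, At, At1, At2, Matrix.diagonal]
      try field_simp
      ring
    · simp [Matrix.mul_apply, Fin.sum_univ_five, Pm, At, At1, At2, Matrix.diagonal]
      try field_simp
      ring
    · simp [Matrix.mul_apply, Fin.sum_univ_five, Pm, At, At1, At2, Matrix.diagonal]
      try field_simp
      ring
    · simp [Matrix.mul_apply, Fin.sum_univ_five, Pm, At, At1, At2, Matrix.diagonal]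
      try field_simp
      ring
    · simp [Matrix.mul_apply, Fin.sum_univ_five, Pm, At, At1, At2, Matrix.diagonal]
      try field_simp
      ring
    · simp [Matrix.mul_apply, Fin.sum_univ_five, Pm, At, At1, At2, Matrix.diagonal]
      try field_simp
      ring
    · simp [Matrix.mul_apply, Fin.sum_univ_five, Pm, At, At1, At2, Matrix.diagonal]
      try field_simp
      ring
    · simp [Matrix.mul_apply, Fin.sum_univ_five, Pm, At, At1, At2, Matrix.diagonal]
      try field_simp
      ring
    · simp [Matrix.mul_apply, Fin.sum_univ_five, Pm, At, At1, At2, Matrix.diagonal]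
      try field_simp
      ring
    · simp [Matrix.mul_apply, Fin.sum_univ_five, Pm, At, At1, At2, Matrix.diagonal]
      try field_simp
      ring
    · simp [Matrix.mul_apply, Fin.sum_univ_five, Pm, At, At1, At2, Matrix.diagonal]
      try field_simp
      ring
    · simp [Matrix.mul_apply, Fin.sum_univ_five, Pm, At, At1, At2, Matrix.diagonal]
      try field_simp
      ring
    · simp [Matrix.mul_apply, Fin.sum_univ_five, Pm, At, At1, At2, Matrix.diagonal]
      try field_simp
      ring
    · simp [Matrix.mul_apply, Fin.sum_univ_five, Pm, At, At1, At2, Matrix.diagonal]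
      try field_simp
      ring
    · simp [Matrix.mul_apply, Fin.sum_univ_five, Pm, At, At1, At2, Matrix.diagonal]
      try field_simp
      linear_combination (-ξ1)*hs2
    · simp [Matrix.mul_apply, Fin.sum_univ_five, Pm, At, At1, At2, Matrix.diagonal]
      try field_simp
      linear_combination (-ξ1)*hs2
    · simp [Matrix.mul_apply, Fin.sum_univ_five, Pm, At, At1, At2, Matrix.diagonal]
      try field_simp
      ring
    · simp [Matrix.mul_apply, Fin.sum_univ_five, Pm, At, At1, At2, Matrix.diagonal]
      try field_simp
      ring
    · simp [Matrix.mul_apply, Fin.sum_univ_five, Pm, At, At1, At2, Matrix.diagonal]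
      try field_simp
      ring
    · simp [Matrix.mul_apply, Fin.sum_univ_five, Pm, At, At1, At2, Matrix.diagonal]
      try field_simp
      linear_combination (-ξ2)*hs2
    · simp [Matrix.mul_apply, Fin.sum_univ_five, Pm, At, At1, At2, Matrix.diagonal]
      try field_simp
      linear_combination (-ξ2)*hs2
  refine ⟨V, hu, ?_⟩
  rw [Matrix.mul_assoc, hMV, ← Matrix.mul_assoc, Matrix.nonsing_inv_mul _ hu, Matrix.one_mul]
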